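/- Let X be a metrized Suslin space, Y a separable Fréchet space, and f : X → Y a function. Then f is Baire-2 if and only if there exists a nested (decreasing) sequence (G_n)_{n=1}^∞ of Fσ subsets of X × Y, each of whose vertical sections G_n(x) is convex, such that: (i) ⋂_{n=1}^∞ G_n = gr(f); (ii) for each x ∈ X the diameter of G_n(x) tends to 0 as n → ∞; and (iii) for every open subset U of Y and every n, the projection of (X × U) ∩ G_n to X is an Fσ subset of X. -/

import Mathlib

open Filter Topology

/-- A function is Baire-1 if it is the pointwise limit of a sequence of continuous functions. -/
def BaireOne {X Y : Type*} [TopologicalSpace X] [TopologicalSpace Y] (f : X → Y) : Prop :=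
  ∃ g : ℕ → X → Y, (∀ n, Continuous (g n)) ∧
    ∀ x, Filter.Tendsto (fun n => g n x) Filter.atTop (nhds (f x))

/-- A function is Baire-2 if it is the pointwise limit of a sequence of Baire-1 functions. -/
def BaireTwo {X Y : Type*} [TopologicalSpace X] [TopologicalSpace Y] (f : X → Y) : Prop :=
  ∃ g : ℕ → X → Y, (∀ n, BaireOne (g n)) ∧
    ∀ x, Filter.Tendsto (fun n => g n x) Filter.atTop (nhds (f x))

/-- An Fσ set is a countable union of closed sets. -/
def IsFSigma {Z : Type*} [TopologicalSpace Z] (s : Set Z) : Prop :=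
  ∃ F : ℕ → Set Z, (∀ n, IsClosed (F n)) ∧ s = ⋃ n, F n

lemma IsClosed.isFSigma {Z : Type*} [TopologicalSpace Z] {s : Set Z} (h : IsClosed s) :
    IsFSigma s := ⟨fun _ => s, fun _ => h, (Set.iUnion_const _).symm⟩

lemma isFSigma_iUnion {Z : Type*} [TopologicalSpace Z] {ι : Type*} [Countable ι]
    (s : ι → Set Z) (h : ∀ i, IsFSigma (s i)) : IsFSigma (⋃ i, s i) := by
  choose F hFc hFe using h
  cases isEmpty_or_nonempty ι with
  | inl hι => simpa using IsClosed.isFSigma (isClosed_empty (X := Z))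
  | inr hι =>
    obtain ⟨e, he⟩ := exists_surjective_nat ι
    refine ⟨fun n => F (e (Nat.unpair n).1) (Nat.unpair n).2, fun n => hFc _ _, ?_⟩
    ext z
    simp only [Set.mem_iUnion]
    constructor
    · rintro ⟨i, hz⟩
      obtain ⟨k, rfl⟩ := he i
      rw [hFe] at hz
      obtain ⟨m, hm⟩ := Set.mem_iUnion.1 hz
      exact ⟨Nat.pair k m, by simpa using hm⟩
    · rintro ⟨n, hn⟩
      exact ⟨e (Nat.unpair n).1, by rw [hFe]; exact Set.mem_iUnion.2 ⟨_, hn⟩⟩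

/-- An open subset of a metric space is Fσ. -/
lemma IsOpen.isFSigma' {Z : Type*} [MetricSpace Z] {U : Set Z} (h : IsOpen U) :
    IsFSigma U := by
  rcases eq_or_ne U Set.univ with rfl | hne
  · exact ⟨fun _ => Set.univ, fun _ => isClosed_univ, (Set.iUnion_const _).symm⟩
  · have hcne : Uᶜ.Nonempty := Set.nonempty_compl.2 hne
    refine ⟨fun n => {z | (1:ℝ)/(n+1) ≤ Metric.infDist z Uᶜ}, ?_, ?_⟩
    · intro n
      exact isClosed_le continuous_const (Metric.continuous_infDist_pt _)
    · ext z
      simp only [Set.mem_iUnion, Set.mem_setOf_eq]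
      constructor
      · intro hz
        have hpos : 0 < Metric.infDist z Uᶜ :=
          (h.isClosed_compl.notMem_iff_infDist_pos hcne).1 (by simpa using hz)
        obtain ⟨n, hn⟩ := exists_nat_one_div_lt hpos
        exact ⟨n, le_of_lt (by exact_mod_cast hn)⟩
      · rintro ⟨n, hn⟩
        by_contra hz
        rw [← Set.mem_compl_iff] at hz
        have := Metric.infDist_zero_of_mem hz
        rw [this] at hn
        have : (0:ℝ) < 1/(n+1) := by positivity
        linarith

/-- Preimage of an open set under a Baire-1 function is Fσ. -/
lemma BaireOne.isFSigma_preimage {Z W : Type*} [TopologicalSpace Z] [MetricSpace W]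
    {h : Z → W} (hb : BaireOne h) {U : Set W} (hU : IsOpen U) : IsFSigma (h ⁻¹' U) := by
  obtain ⟨g, hgc, hgl⟩ := hb
  rcases eq_or_ne U Set.univ with rfl | hne
  · exact ⟨fun _ => Set.univ, fun _ => isClosed_univ, (Set.iUnion_const _).symm⟩
  have hcne : Uᶜ.Nonempty := Set.nonempty_compl.2 hne
  set C : ℕ → Set W := fun m => {w | (1:ℝ)/(m+1) ≤ Metric.infDist w Uᶜ} with hC
  have hCc : ∀ m, IsClosed (C m) := fun m =>
    isClosed_le continuous_const (Metric.continuous_infDist_pt _)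
  have hCU : ∀ m, C m ⊆ U := by
    intro m w hw
    by_contra hwU
    rw [← Set.mem_compl_iff] at hwU
    have := Metric.infDist_zero_of_mem hwU
    simp only [hC, Set.mem_setOf_eq, this] at hw
    have : (0:ℝ) < 1/(m+1) := by positivity
    linarith
  have key : h ⁻¹' U = ⋃ p : ℕ × ℕ, (⋂ k ∈ Set.Ici p.2, g k ⁻¹' (C p.1)) := by
    ext z
    simp only [Set.mem_iUnion, Set.mem_iInter, Set.mem_preimage, Set.mem_Ici]
    constructor
    · intro hz
      have hpos : 0 < Metric.infDist (h z) Uᶜ :=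
        (hU.isClosed_compl.notMem_iff_infDist_pos hcne).1 (by simpa using hz)
      obtain ⟨m, hm⟩ := exists_nat_one_div_lt hpos
      have hopen : IsOpen {w | (1:ℝ)/(m+1) < Metric.infDist w Uᶜ} :=
        isOpen_lt continuous_const (Metric.continuous_infDist_pt _)
      have hmem : h z ∈ {w | (1:ℝ)/(m+1) < Metric.infDist w Uᶜ} := by
        simpa using (by exact_mod_cast hm : (1:ℝ)/(m+1) < Metric.infDist (h z) Uᶜ)
      have := (hgl z).eventually (hopen.mem_nhds hmem)
      obtain ⟨N, hN⟩ := this.exists_forall_of_atTop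
      exact ⟨(m, N), fun k hk => le_of_lt (hN k hk)⟩
    · rintro ⟨⟨m, N⟩, hmN⟩
      apply hCU m
      have : Filter.Tendsto (fun k => g k z) Filter.atTop (nhds (h z)) := hgl z
      refine (hCc m).mem_of_tendsto this ?_
      filter_upwards [Filter.eventually_ge_atTop N] with k hk using hmN k hk
  rw [key]
  refine isFSigma_iUnion _ fun p => ?_
  exact IsClosed.isFSigma (isClosed_biInter fun k _ => (hCc p.1).preimage (hgc k))

/-- Reduction: a countable Fσ cover can be refined to a disjoint Fσ cover. -/
lemma fsigma_reduction {Z : Type*} [MetricSpace Z] (A : ℕ → Set Z)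
    (hA : ∀ k, IsFSigma (A k)) (hcov : (⋃ k, A k) = Set.univ) :
    ∃ B : ℕ → Set Z, (∀ k, IsFSigma (B k)) ∧ (∀ k, B k ⊆ A k) ∧
      (Pairwise (Function.onFun Disjoint B)) ∧ (⋃ k, B k) = Set.univ := by
  choose F hFc hFe using hA
  -- enumerate pairs
  set G : ℕ → Set Z := fun p => F (Nat.unpair p).1 (Nat.unpair p).2 with hG
  set D : ℕ → Set Z := fun p => G p \ ⋃ q ∈ Set.Iio p, G q with hD
  have hDsub : ∀ p, D p ⊆ G p := fun p => Set.diff_subset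
  have hDfs : ∀ p, IsFSigma (D p) := by
    intro p
    have hop : IsOpen (⋃ q ∈ Set.Iio p, G q)ᶜ := by
      rw [isOpen_compl_iff]
      exact Set.Finite.isClosed_biUnion (Set.finite_Iio p) (fun q _ => hFc _ _)
    obtain ⟨E, hEc, hEe⟩ := hop.isFSigma'
    refine ⟨fun m => G p ∩ E m, fun m => (hFc _ _).inter (hEc m), ?_⟩
    rw [hD]
    simp only [Set.diff_eq]
    rw [hEe, Set.inter_iUnion]
  have hDdisj : Pairwise (Function.onFun Disjoint D) := by
    intro p q hpq
    rcases lt_or_gt_of_ne hpq with h | h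
    · refine Set.disjoint_left.2 fun z hzp hzq => ?_
      exact hzq.2 (Set.mem_biUnion h (hDsub p hzp))
    · refine Set.disjoint_left.2 fun z hzp hzq => ?_
      exact hzp.2 (Set.mem_biUnion h (hDsub q hzq))
  have hDcov : (⋃ p, D p) = Set.univ := by
    rw [Set.eq_univ_iff_forall]
    intro z
    have hz : ∃ p, z ∈ G p := by
      have : z ∈ ⋃ k, A k := hcov ▸ Set.mem_univ z
      obtain ⟨k, hk⟩ := Set.mem_iUnion.1 this
      rw [hFe] at hk
      obtain ⟨m, hm⟩ := Set.mem_iUnion.1 hk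
      exact ⟨Nat.pair k m, by simpa [hG] using hm⟩
    classical
    refine Set.mem_iUnion.2 ⟨Nat.find hz, Nat.find_spec hz, ?_⟩
    intro hmem
    obtain ⟨q, hq⟩ := Set.mem_iUnion.1 hmem
    simp only [Set.mem_iUnion, Set.mem_Iio, exists_prop] at hq
    obtain ⟨hqlt, hqG⟩ := hq
    exact Nat.find_min hz hqlt hqG
  -- regroup
  refine ⟨fun k => ⋃ m, D (Nat.pair k m), ?_, ?_, ?_, ?_⟩
  · intro k; exact isFSigma_iUnion _ fun m => hDfs _
  · intro k z hz
    obtain ⟨m, hm⟩ := Set.mem_iUnion.1 hz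
    have : z ∈ G (Nat.pair k m) := hDsub _ hm
    simp only [hG, Nat.unpair_pair] at this
    rw [hFe]; exact Set.mem_iUnion.2 ⟨m, this⟩
  · intro k k' hkk'
    refine Set.disjoint_left.2 fun z hz hz' => ?_
    obtain ⟨m, hm⟩ := Set.mem_iUnion.1 hz
    obtain ⟨m', hm'⟩ := Set.mem_iUnion.1 hz'
    have hne : Nat.pair k m ≠ Nat.pair k' m' := by
      intro h
      have := congrArg (fun p => (Nat.unpair p).1) h
      simp at this
      exact hkk' this
    exact Set.disjoint_left.1 (hDdisj hne) hm hm'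
  · rw [Set.eq_univ_iff_forall]
    intro z
    have : z ∈ ⋃ p, D p := hDcov ▸ Set.mem_univ z
    obtain ⟨p, hp⟩ := Set.mem_iUnion.1 this
    refine Set.mem_iUnion.2 ⟨(Nat.unpair p).1, Set.mem_iUnion.2 ⟨(Nat.unpair p).2, ?_⟩⟩
    rwa [Nat.pair_unpair]

/-- A countably-valued function constant on the pieces of a disjoint Fσ cover is Baire-1. -/
lemma baireOne_of_fsigma_pieces {X Y : Type*} [MetricSpace X]
    [AddCommGroup Y] [Module ℝ Y] [MetricSpace Y]
    [IsTopologicalAddGroup Y] [ContinuousSMul ℝ Y]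
    (B : ℕ → Set X) (hBf : ∀ k, IsFSigma (B k))
    (hBd : Pairwise (Function.onFun Disjoint B)) (hBc : (⋃ k, B k) = Set.univ)
    (v : ℕ → Y) (h : X → Y) (hh : ∀ k x, x ∈ B k → h x = v k) : BaireOne h := by
  classical
  choose F' hF'c hF'e using hBf
  set F : ℕ → ℕ → Set X := fun k m => ⋃ i ∈ Finset.range (m+1), F' k i with hF
  have hFc : ∀ k m, IsClosed (F k m) := fun k m =>
    isClosed_biUnion_finset fun i _ => hF'c k i
  have hFB : ∀ k m, F k m ⊆ B k := by
    intro k m x hx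
    simp only [hF, Set.mem_iUnion, exists_prop] at hx
    obtain ⟨i, _, hi⟩ := hx
    rw [hF'e]; exact Set.mem_iUnion.2 ⟨i, hi⟩
  have hFmono : ∀ k m m', m ≤ m' → F k m ⊆ F k m' := by
    intro k m m' hm x hx
    simp only [hF, Set.mem_iUnion, exists_prop] at hx ⊢
    obtain ⟨i, hi, hxi⟩ := hx
    exact ⟨i, Finset.mem_range.2 (lt_of_lt_of_le (Finset.mem_range.1 hi) (by omega)), hxi⟩
  have hFex : ∀ x k, x ∈ B k → ∃ j, ∀ m ≥ j, x ∈ F k m := by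
    intro x k hx
    rw [hF'e] at hx
    obtain ⟨i, hi⟩ := Set.mem_iUnion.1 hx
    exact ⟨i, fun m hm => by
      simp only [hF, Set.mem_iUnion, exists_prop]
      exact ⟨i, Finset.mem_range.2 (by omega), hi⟩⟩
  -- the sets D m k : union of the other pieces at stage m
  set D : ℕ → ℕ → Set X := fun m k => ⋃ k' ∈ (Finset.range m).erase k, F k' m with hD
  have hDc : ∀ m k, IsClosed (D m k) := fun m k =>
    isClosed_biUnion_finset fun k' _ => hFc k' m
  have hCD : ∀ m k, Disjoint (F k m) (D m k) := by
    intro m k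
    refine Set.disjoint_left.2 fun x hx hx' => ?_
    simp only [hD, Set.mem_iUnion, exists_prop] at hx'
    obtain ⟨k', hk', hxk'⟩ := hx'
    exact Set.disjoint_left.1 (hBd (Finset.ne_of_mem_erase hk').symm)
      (hFB k m hx) (hFB k' m hxk')
  set lam : ℕ → ℕ → X → ℝ := fun m k x =>
    if (F k m).Nonempty then
      (if (D m k).Nonempty then
        Metric.infDist x (D m k) / (Metric.infDist x (F k m) + Metric.infDist x (D m k))
      else 1)
    else 0 with hlam
  have hden : ∀ m k, (F k m).Nonempty → (D m k).Nonempty → ∀ x : X,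
      0 < Metric.infDist x (F k m) + Metric.infDist x (D m k) := by
    intro m k hC hDne x
    have n1 : (0:ℝ) ≤ Metric.infDist x (F k m) := Metric.infDist_nonneg
    have n2 : (0:ℝ) ≤ Metric.infDist x (D m k) := Metric.infDist_nonneg
    rcases lt_or_eq_of_le (add_nonneg n1 n2) with hlt | heq
    · exact hlt
    · exfalso
      have h1 : Metric.infDist x (F k m) = 0 := by linarith
      have h2 : Metric.infDist x (D m k) = 0 := by linarith
      have hx1 : x ∈ F k m := ((hFc k m).mem_iff_infDist_zero hC).2 h1
      have hx2 : x ∈ D m k := ((hDc m k).mem_iff_infDist_zero hDne).2 h2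
      exact Set.disjoint_left.1 (hCD m k) hx1 hx2
  have hlamc : ∀ m k, Continuous (lam m k) := by
    intro m k
    rw [hlam]
    simp only
    split_ifs with h1 h2
    · exact (Metric.continuous_infDist_pt _).div
        ((Metric.continuous_infDist_pt _).add (Metric.continuous_infDist_pt _))
        (fun x => ne_of_gt (hden m k h1 h2 x))
    · exact continuous_const
    · exact continuous_const
  set g : ℕ → X → Y := fun m x => ∑ k ∈ Finset.range m, lam m k x • v k with hg
  have hgc : ∀ m, Continuous (g m) := by
    intro m
    exact continuous_finset_sum _ fun k _ => (hlamc m k).smul continuous_const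
  have hval : ∀ m k, k < m → ∀ x ∈ F k m, g m x = v k := by
    intro m k hkm x hx
    have hlam1 : lam m k x = 1 := by
      rw [hlam]
      simp only
      rw [if_pos ⟨x, hx⟩]
      split_ifs with h2
      · have hx0 : Metric.infDist x (F k m) = 0 := Metric.infDist_zero_of_mem hx
        have hxD : x ∉ D m k := fun hxd => Set.disjoint_left.1 (hCD m k) hx hxd
        have hpos : 0 < Metric.infDist x (D m k) :=
          ((hDc m k).notMem_iff_infDist_pos h2).1 hxD
        rw [hx0, zero_add, div_self (ne_of_gt hpos)]
      · rfl
    have hlam0 : ∀ k' ∈ Finset.range m, k' ≠ k → lam m k' x = 0 := by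
      intro k' hk' hne
      rw [hlam]
      simp only
      split_ifs with h1 h2
      · have hxD : x ∈ D m k' := by
          simp only [hD, Set.mem_iUnion, exists_prop]
          exact ⟨k, Finset.mem_erase.2 ⟨hne.symm, Finset.mem_range.2 hkm⟩, hx⟩
        rw [Metric.infDist_zero_of_mem hxD, zero_div]
      · exfalso
        exact h2 ⟨x, by
          simp only [hD, Set.mem_iUnion, exists_prop]
          exact ⟨k, Finset.mem_erase.2 ⟨hne.symm, Finset.mem_range.2 hkm⟩, hx⟩⟩
      · rfl
    rw [hg]
    simp only
    rw [Finset.sum_eq_single k]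
    · rw [hlam1, one_smul]
    · intro k' hk' hne
      rw [hlam0 k' hk' hne, zero_smul]
    · intro hk
      exact absurd (Finset.mem_range.2 hkm) hk
  refine ⟨g, hgc, fun x => ?_⟩
  have hx : ∃ k, x ∈ B k := Set.mem_iUnion.1 (hBc ▸ Set.mem_univ x)
  obtain ⟨k, hk⟩ := hx
  obtain ⟨j, hj⟩ := hFex x k hk
  have : ∀ m ≥ max j (k+1), g m x = h x := by
    intro m hm
    rw [hh k x hk]
    exact hval m k (by omega) x (hj m (by omega))
  exact tendsto_atTop_of_eventually_const this

lemma forward_direction {X Y : Type*} [MetricSpace X]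
    [AddCommGroup Y] [Module ℝ Y] [MetricSpace Y]
    [IsTopologicalAddGroup Y] [ContinuousSMul ℝ Y] [LocallyConvexSpace ℝ Y]
    (hinv : ∀ a x y : Y, dist (a + x) (a + y) = dist x y)
    (f : X → Y) (hf : BaireTwo f) :
    ∃ G : ℕ → Set (X × Y),
      (∀ n, G (n + 1) ⊆ G n) ∧
      (∀ n, IsFSigma (G n)) ∧
      (∀ n, ∀ x : X, Convex ℝ {y : Y | (x, y) ∈ G n}) ∧
      (⋂ n, G n) = {p : X × Y | p.2 = f p.1} ∧
      (∀ x : X,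
        Tendsto (fun n => EMetric.diam {y : Y | (x, y) ∈ G n}) atTop (𝓝 0)) ∧
      (∀ U : Set Y, IsOpen U → ∀ n,
        IsFSigma {x : X | ∃ y ∈ U, (x, y) ∈ G n}) := by
  classical
  obtain ⟨fm, hfm1, hfml⟩ := hf
  -- Step 1: a decreasing sequence of convex open neighborhoods of 0
  have hstep : ∀ W : Set Y, W ∈ 𝓝 (0:Y) →
      ∃ C : Set Y, IsOpen C ∧ Convex ℝ C ∧ (0:Y) ∈ C ∧ C ⊆ W := by
    intro W hW
    obtain ⟨S, ⟨hS1, hS2⟩, hS3⟩ := (LocallyConvexSpace.convex_basis_zero ℝ Y).mem_iff.1 hW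
    exact ⟨interior S, isOpen_interior, hS2.interior,
      mem_interior_iff_mem_nhds.2 hS1, interior_subset.trans hS3⟩
  have hstep' : ∀ (p : {C : Set Y // IsOpen C ∧ Convex ℝ C ∧ (0:Y) ∈ C}) (n : ℕ),
      ∃ C : Set Y, (IsOpen C ∧ Convex ℝ C ∧ (0:Y) ∈ C) ∧ C ⊆ p.1 ∧
        C ⊆ Metric.ball (0:Y) (1/(n+1)) := by
    intro p n
    have hmem : p.1 ∩ Metric.ball (0:Y) (1/(n+1)) ∈ 𝓝 (0:Y) := by
      refine Filter.inter_mem (p.2.1.mem_nhds p.2.2.2) ?_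
      exact Metric.ball_mem_nhds _ (by positivity)
    obtain ⟨C, h1, h2, h3, h4⟩ := hstep _ hmem
    exact ⟨C, ⟨h1, h2, h3⟩, h4.trans Set.inter_subset_left,
      h4.trans Set.inter_subset_right⟩
  choose st hst1 hst2 hst3 using hstep'
  set Q : ℕ → {C : Set Y // IsOpen C ∧ Convex ℝ C ∧ (0:Y) ∈ C} := fun n =>
    Nat.rec ⟨st ⟨Set.univ, isOpen_univ, convex_univ, Set.mem_univ 0⟩ 0,
      hst1 _ 0⟩ (fun n q => ⟨st q (n+1), hst1 q (n+1)⟩) n with hQ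
  set V : ℕ → Set Y := fun n => (Q n).1 with hV
  have hVopen : ∀ n, IsOpen (V n) := fun n => (Q n).2.1
  have hVconv : ∀ n, Convex ℝ (V n) := fun n => (Q n).2.2.1
  have hV0 : ∀ n, (0:Y) ∈ V n := fun n => (Q n).2.2.2
  have hVball : ∀ n, V n ⊆ Metric.ball (0:Y) (1/(n+1)) := by
    intro n
    cases n with
    | zero => exact hst3 _ 0
    | succ n => exact hst3 _ (n+1)
  have hVdec : ∀ n, V (n+1) ⊆ V n := fun n => hst2 _ (n+1)
  have hVanti : Antitone V := antitone_nat_of_succ_le hVdec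
  -- Step 2: the strips
  set S : ℕ → (k : ℕ) → (Fin k → ℕ) → Set (X × Y) := fun n k σ =>
    {p : X × Y | ∃ l ∈ stdSimplex ℝ (Fin k), p.2 - ∑ i, l i • fm (σ i) p.1 ∈ V n} with hS
  set G : ℕ → Set (X × Y) := fun n =>
    ⋃ (k : ℕ), ⋃ (σ : Fin k → ℕ), ⋃ (_ : ∀ i, n ≤ σ i), S n k σ with hG
  have hmemG : ∀ n (p : X × Y), p ∈ G n ↔ ∃ (k : ℕ) (σ : Fin k → ℕ),
      (∀ i, n ≤ σ i) ∧ ∃ l ∈ stdSimplex ℝ (Fin k),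
        p.2 - ∑ i, l i • fm (σ i) p.1 ∈ V n := by
    intro n p
    simp only [hG, hS, Set.mem_iUnion, Set.mem_setOf_eq]
    tauto
  -- key estimate: sections are eventually inside small balls around f x
  have hsub : ∀ (x : X) (ε : ℝ), 0 < ε → ∃ N, ∀ n ≥ N, ∀ y : Y,
      (x, y) ∈ G n → dist y (f x) < ε := by
    intro x ε hε
    obtain ⟨n0, hn0⟩ := exists_nat_one_div_lt (show (0:ℝ) < ε/2 by positivity)
    have hVsmall : V n0 ⊆ Metric.ball (0:Y) (ε/2) := fun z hz =>
      Metric.mem_ball.2 (lt_trans (Metric.mem_ball.1 (hVball n0 hz)) hn0)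
    have hWopen : IsOpen {z : Y | z - f x ∈ V n0} :=
      (hVopen n0).preimage (continuous_id.sub continuous_const)
    have hWmem : f x ∈ {z : Y | z - f x ∈ V n0} := by
      simp only [Set.mem_setOf_eq, sub_self]; exact hV0 n0
    obtain ⟨M, hM⟩ := ((hfml x).eventually (hWopen.mem_nhds hWmem)).exists_forall_of_atTop
    refine ⟨max n0 M, fun n hn y hy => ?_⟩
    rw [hmemG] at hy
    obtain ⟨k, σ, hσ, l, hl, hv⟩ := hy
    set s : Y := ∑ i, l i • fm (σ i) x with hs
    have h1 : s - f x ∈ V n0 := by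
      have : s - f x = ∑ i, l i • (fm (σ i) x - f x) := by
        rw [hs]
        have : ∑ i, l i • (fm (σ i) x - f x)
            = (∑ i, l i • fm (σ i) x) - (∑ i, l i • f x) := by
          rw [← Finset.sum_sub_distrib]
          exact Finset.sum_congr rfl fun i _ => by rw [smul_sub]
        rw [this]
        congr 1
        rw [← Finset.sum_smul, hl.2, one_smul]
      rw [this]
      refine (hVconv n0).sum_mem (fun i _ => hl.1 i) hl.2 (fun i _ => ?_)
      exact hM (σ i) (le_trans (le_trans (le_max_right n0 M) hn) (hσ i))
    have h2 : y - s ∈ V n0 := hVanti (le_trans (le_max_left n0 M) hn) hv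
    have h3 : dist (y - f x) 0 < ε := by
      have heq : y - f x = (y - s) + (s - f x) := by abel
      calc dist (y - f x) 0 ≤ dist ((y - s) + (s - f x)) ((y - s) + 0) + dist ((y - s) + 0) 0 :=
            by rw [← heq, add_zero]; exact dist_triangle _ _ _
        _ = dist (s - f x) 0 + dist (y - s) 0 := by rw [hinv, add_zero]
        _ < ε/2 + ε/2 := add_lt_add (Metric.mem_ball.1 (hVsmall h1)) (Metric.mem_ball.1 (hVsmall h2))
        _ = ε := by ring
    calc dist y (f x) = dist (f x + (y - f x)) (f x + 0) := by rw [add_sub_cancel, add_zero]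
      _ = dist (y - f x) 0 := hinv _ _ _
      _ < ε := h3
  refine ⟨G, ?_, ?_, ?_, ?_, ?_, ?_⟩
  -- nested
  · intro n p hp
    rw [hmemG] at hp ⊢
    obtain ⟨k, σ, hσ, l, hl, hv⟩ := hp
    exact ⟨k, σ, fun i => le_trans (Nat.le_succ n) (hσ i), l, hl, hVdec n hv⟩
  -- Fσ
  · intro n
    refine isFSigma_iUnion _ fun k => isFSigma_iUnion _ fun σ => ?_
    rw [Set.iUnion_eq_if]
    by_cases hσ : ∀ i, n ≤ σ i
    swap
    · rw [if_neg hσ]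
      exact ⟨fun _ => ∅, fun _ => isClosed_empty, (Set.iUnion_const _).symm⟩
    rw [if_pos hσ]
    -- S n k σ is the preimage of an open set under a Baire-1 map
    set Φ : X × Y → (Fin k → Y) × Y := fun p => (fun i => fm (σ i) p.1, p.2) with hΦ
    have hΦb : BaireOne Φ := by
      choose c hc hcl using fun m => hfm1 m
      refine ⟨fun j p => (fun i => c (σ i) j p.1, p.2), ?_, ?_⟩
      · intro j
        exact Continuous.prodMk (continuous_pi fun i => (hc (σ i) j).comp continuous_fst)
          continuous_snd
      · intro p
        refine Filter.Tendsto.prodMk_nhds ?_ tendsto_const_nhds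
        rw [tendsto_pi_nhds]
        intro i
        exact hcl (σ i) p.1
    set O : Set ((Fin k → Y) × Y) :=
      ⋃ l ∈ stdSimplex ℝ (Fin k), (fun q : (Fin k → Y) × Y => q.2 - ∑ i, l i • q.1 i) ⁻¹' (V n)
      with hO
    have hOopen : IsOpen O := by
      refine isOpen_biUnion fun l _ => (hVopen n).preimage ?_
      exact continuous_snd.sub (continuous_finset_sum _ fun i _ =>
        ((continuous_apply i).comp continuous_fst).const_smul _)
    have hSeq : S n k σ = Φ ⁻¹' O := by
      ext p
      simp only [hS, hO, Set.mem_setOf_eq, Set.mem_preimage, Set.mem_iUnion, hΦ]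
      tauto
    rw [hSeq]
    exact hΦb.isFSigma_preimage hOopen
  -- convex sections
  · intro n x
    intro y1 hy1 y2 hy2 a b ha hb hab
    simp only [Set.mem_setOf_eq, hmemG] at hy1 hy2 ⊢
    obtain ⟨k1, σ1, hσ1, l1, hl1, hv1⟩ := hy1
    obtain ⟨k2, σ2, hσ2, l2, hl2, hv2⟩ := hy2
    refine ⟨k1 + k2, Fin.append σ1 σ2, ?_, Fin.append (a • l1) (b • l2), ?_, ?_⟩
    · intro i
      refine Fin.addCases (fun i => ?_) (fun i => ?_) i
      · rw [Fin.append_left]; exact hσ1 i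
      · rw [Fin.append_right]; exact hσ2 i
    · constructor
      · intro i
        refine Fin.addCases (fun i => ?_) (fun i => ?_) i
        · rw [Fin.append_left]; exact mul_nonneg ha (hl1.1 i)
        · rw [Fin.append_right]; exact mul_nonneg hb (hl2.1 i)
      · rw [Fin.sum_univ_add]
        simp only [Fin.append_left, Fin.append_right, Pi.smul_apply, smul_eq_mul]
        rw [← Finset.mul_sum, ← Finset.mul_sum, hl1.2, hl2.2, mul_one, mul_one]
        exact hab
    · have hsum : ∑ i, (Fin.append (a • l1) (b • l2)) i •
          fm ((Fin.append σ1 σ2) i) x =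
          a • (∑ i, l1 i • fm (σ1 i) x) + b • (∑ i, l2 i • fm (σ2 i) x) := by
        rw [Fin.sum_univ_add]
        simp only [Fin.append_left, Fin.append_right, Pi.smul_apply, smul_eq_mul]
        rw [Finset.smul_sum, Finset.smul_sum]
        congr 1 <;> exact Finset.sum_congr rfl fun i _ => by rw [mul_smul]
      rw [hsum]
      have : a • y1 + b • y2 - (a • (∑ i, l1 i • fm (σ1 i) x) + b • (∑ i, l2 i • fm (σ2 i) x))
          = a • (y1 - ∑ i, l1 i • fm (σ1 i) x) + b • (y2 - ∑ i, l2 i • fm (σ2 i) x) := by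
        rw [smul_sub, smul_sub]; abel
      rw [this]
      exact (hVconv n) hv1 hv2 ha hb hab
  -- intersection = graph
  · ext p
    simp only [Set.mem_iInter, Set.mem_setOf_eq]
    constructor
    · intro hp
      refine eq_of_forall_dist_le fun ε hε => ?_
      obtain ⟨N, hN⟩ := hsub p.1 ε hε
      exact le_of_lt (hN N le_rfl p.2 (by simpa using hp N))
    · intro hp n
      rw [hmemG]
      have hWopen : IsOpen {z : Y | f p.1 - z ∈ V n} :=
        (hVopen n).preimage (continuous_const.sub continuous_id)
      have hWmem : f p.1 ∈ {z : Y | f p.1 - z ∈ V n} := by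
        simp only [Set.mem_setOf_eq, sub_self]; exact hV0 n
      have := ((hfml p.1).eventually (hWopen.mem_nhds hWmem)).and
        (Filter.eventually_ge_atTop n)
      obtain ⟨m, hm1, hm2⟩ := this.exists
      refine ⟨1, fun _ => m, fun _ => hm2, fun _ => 1,
        ⟨fun _ => zero_le_one, by simp⟩, ?_⟩
      simp only [Fin.sum_univ_one, one_smul, hp]
      exact hm1
  -- diam
  · intro x
    rw [ENNReal.tendsto_atTop_zero]
    intro ε hε
    rcases eq_or_ne ε ⊤ with rfl | hεt
    · exact ⟨0, fun _ _ => le_top⟩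
    have hr : 0 < ε.toReal := ENNReal.toReal_pos (ne_of_gt hε) hεt
    obtain ⟨N, hN⟩ := hsub x (ε.toReal/2) (by positivity)
    refine ⟨N, fun n hn => ?_⟩
    have : EMetric.diam {y : Y | (x, y) ∈ G n} ≤ ENNReal.ofReal ε.toReal := by
      refine EMetric.diam_le fun y hy z hz => ?_
      rw [edist_dist]
      refine ENNReal.ofReal_le_ofReal ?_
      calc dist y z ≤ dist y (f x) + dist (f x) z := dist_triangle _ _ _
        _ ≤ ε.toReal/2 + ε.toReal/2 := by
            refine add_le_add (le_of_lt (hN n hn y hy)) ?_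
            rw [dist_comm]
            exact le_of_lt (hN n hn z hz)
        _ = ε.toReal := by ring
    rwa [ENNReal.ofReal_toReal hεt] at this
  -- projections
  · intro U hU n
    have hGe : {x : X | ∃ y ∈ U, (x, y) ∈ G n}
        = ⋃ (k : ℕ), ⋃ (σ : Fin k → ℕ), ⋃ (_ : ∀ i, n ≤ σ i),
          {x : X | ∃ y ∈ U, (x, y) ∈ S n k σ} := by
      ext x
      simp only [Set.mem_setOf_eq, Set.mem_iUnion, hmemG, hS]
      constructor
      · rintro ⟨y, hy, k, σ, hσ, l, hl, hv⟩
        exact ⟨k, σ, hσ, y, hy, l, hl, hv⟩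
      · rintro ⟨k, σ, hσ, y, hy, l, hl, hv⟩
        exact ⟨y, hy, k, σ, hσ, l, hl, hv⟩
    rw [hGe]
    refine isFSigma_iUnion _ fun k => isFSigma_iUnion _ fun σ => ?_
    rw [Set.iUnion_eq_if]
    by_cases hσ : ∀ i, n ≤ σ i
    swap
    · rw [if_neg hσ]
      exact ⟨fun _ => ∅, fun _ => isClosed_empty, (Set.iUnion_const _).symm⟩
    rw [if_pos hσ]
    set Ψ : X → (Fin k → Y) := fun x i => fm (σ i) x with hΨ
    have hΨb : BaireOne Ψ := by
      choose c hc hcl using fun m => hfm1 m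
      refine ⟨fun j x i => c (σ i) j x, ?_, ?_⟩
      · intro j; exact continuous_pi fun i => hc (σ i) j
      · intro x
        rw [tendsto_pi_nhds]
        intro i
        exact hcl (σ i) x
    set O : Set (Fin k → Y) := ⋃ l ∈ stdSimplex ℝ (Fin k), ⋃ y ∈ U,
      {c : Fin k → Y | y - ∑ i, l i • c i ∈ V n} with hO
    have hOopen : IsOpen O := by
      refine isOpen_biUnion fun l _ => isOpen_biUnion fun y _ => ?_
      exact (hVopen n).preimage (continuous_const.sub
        (continuous_finset_sum _ fun i _ => (continuous_apply i).const_smul _))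
    have hSeq : {x : X | ∃ y ∈ U, (x, y) ∈ S n k σ} = Ψ ⁻¹' O := by
      ext x
      simp only [hS, hO, Set.mem_setOf_eq, Set.mem_preimage, Set.mem_iUnion, hΨ]
      tauto
    rw [hSeq]
    exact hΨb.isFSigma_preimage hOopen

lemma backward_direction {X Y : Type*} [MetricSpace X]
    [AddCommGroup Y] [Module ℝ Y] [MetricSpace Y]
    [IsTopologicalAddGroup Y] [ContinuousSMul ℝ Y]
    [TopologicalSpace.SeparableSpace Y]
    (f : X → Y) (G : ℕ → Set (X × Y))
    (h4 : (⋂ n, G n) = {p : X × Y | p.2 = f p.1})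
    (h5 : ∀ x : X, Tendsto (fun n => EMetric.diam {y : Y | (x, y) ∈ G n}) atTop (𝓝 0))
    (h6 : ∀ U : Set Y, IsOpen U → ∀ n, IsFSigma {x : X | ∃ y ∈ U, (x, y) ∈ G n}) :
    BaireTwo f := by
  classical
  have hY : Nonempty Y := ⟨0⟩
  obtain ⟨u, hu⟩ := TopologicalSpace.exists_dense_seq Y
  have hgr : ∀ n x, (x, f x) ∈ G n := by
    intro n x
    have : (x, f x) ∈ ⋂ n, G n := by rw [h4]; simp
    exact Set.mem_iInter.1 this n
  set A : ℕ → ℕ → Set X := fun n k =>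
    {x | ∃ y ∈ Metric.ball (u k) (1/(n+1 : ℝ)), (x, y) ∈ G n} with hA
  have hAf : ∀ n k, IsFSigma (A n k) := fun n k =>
    h6 _ Metric.isOpen_ball n
  have hAcov : ∀ n, (⋃ k, A n k) = Set.univ := by
    intro n
    rw [Set.eq_univ_iff_forall]
    intro x
    have heps : (0:ℝ) < 1/(n+1) := by positivity
    obtain ⟨k, hk⟩ := hu.exists_dist_lt (f x) heps
    exact Set.mem_iUnion.2 ⟨k, ⟨f x, Metric.mem_ball.2 hk, hgr n x⟩⟩
  have hred := fun n => fsigma_reduction (A n) (hAf n) (hAcov n)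
  choose B hBf hBA hBd hBc using hred
  have hex : ∀ n x, ∃ k, x ∈ B n k := fun n x =>
    Set.mem_iUnion.1 ((hBc n) ▸ Set.mem_univ x)
  set hfun : ℕ → X → Y := fun n x => u (Classical.choose (hex n x)) with hhfun
  have hval : ∀ n k x, x ∈ B n k → hfun n x = u k := by
    intro n k x hx
    have hx' := Classical.choose_spec (hex n x)
    by_cases hke : Classical.choose (hex n x) = k
    · rw [hhfun]; simp only; rw [hke]
    · exact absurd hx (Set.disjoint_left.1 (hBd n hke) hx')
  refine ⟨hfun, fun n => baireOne_of_fsigma_pieces (B n) (hBf n) (hBd n) (hBc n) u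
    (hfun n) (fun k x hx => hval n k x hx), ?_⟩
  intro x
  rw [Metric.tendsto_atTop]
  intro ε hε
  have hev1 : ∀ᶠ n in atTop, EMetric.diam {y : Y | (x, y) ∈ G n} < ENNReal.ofReal (ε/2) :=
    (h5 x).eventually (Iio_mem_nhds (by positivity))
  have hev2 : ∀ᶠ n : ℕ in atTop, 1/(n+1 : ℝ) < ε/2 := by
    have : Tendsto (fun n : ℕ => 1/(n+1 : ℝ)) atTop (𝓝 0) := tendsto_one_div_add_atTop_nhds_zero_nat
    exact this.eventually (Iio_mem_nhds (by positivity) : Set.Iio (ε/2) ∈ 𝓝 (0:ℝ))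
  obtain ⟨N, hN⟩ := (hev1.and hev2).exists_forall_of_atTop
  refine ⟨N, fun n hn => ?_⟩
  obtain ⟨hd, he⟩ := hN n hn
  set k := Classical.choose (hex n x) with hk
  have hxB : x ∈ B n k := Classical.choose_spec (hex n x)
  obtain ⟨y, hyb, hyG⟩ := hBA n k hxB
  have h1 : dist y (u k) < 1/(n+1 : ℝ) := Metric.mem_ball.1 hyb
  have h2 : dist y (f x) < ε/2 := by
    have hyS : y ∈ {y : Y | (x, y) ∈ G n} := hyG
    have hfS : f x ∈ {y : Y | (x, y) ∈ G n} := hgr n x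
    have := le_trans (EMetric.edist_le_diam_of_mem hyS hfS) hd.le
    have hlt : edist y (f x) < ENNReal.ofReal (ε/2) := lt_of_le_of_lt (EMetric.edist_le_diam_of_mem hyS hfS) hd
    exact (edist_lt_ofReal).1 hlt
  have : hfun n x = u k := hval n k x hxB
  rw [this]
  calc dist (u k) (f x) ≤ dist (u k) y + dist y (f x) := dist_triangle _ _ _
    _ < 1/(n+1:ℝ) + ε/2 := by rw [dist_comm]; exact add_lt_add h1 h2
    _ < ε/2 + ε/2 := by linarith
    _ = ε := by ring

/-- Let `X` be a metrized Suslin space and `Y` a separable Fréchet space.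
A function `f : X → Y` is Baire-2 iff there is a nested sequence of Fσ subsets of `X × Y`
with convex vertical sections whose intersection is the graph of `f`, whose vertical
sections above each point have diameter tending to `0`, and such that the projection to `X`
of the part of each set lying over any open `U ⊆ Y` is an Fσ subset of `X`. -/
theorem baireTwo_iff_graph_fsigma_strips
    {X Y : Type*} [MetricSpace X]
    (hX : ∃ (Z : Type) (_ : TopologicalSpace Z) (_ : PolishSpace Z) (g : Z → X),
      Continuous g ∧ Function.Surjective g)
    [AddCommGroup Y] [Module ℝ Y] [MetricSpace Y]
    [IsTopologicalAddGroup Y] [ContinuousSMul ℝ Y] [LocallyConvexSpace ℝ Y]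
    [CompleteSpace Y] [TopologicalSpace.SeparableSpace Y]
    (hinv : ∀ a x y : Y, dist (a + x) (a + y) = dist x y)
    (f : X → Y) :
    BaireTwo f ↔
      ∃ G : ℕ → Set (X × Y),
        (∀ n, G (n + 1) ⊆ G n) ∧
        (∀ n, IsFSigma (G n)) ∧
        (∀ n, ∀ x : X, Convex ℝ {y : Y | (x, y) ∈ G n}) ∧
        (⋂ n, G n) = {p : X × Y | p.2 = f p.1} ∧
        (∀ x : X,
          Tendsto (fun n => EMetric.diam {y : Y | (x, y) ∈ G n}) atTop (𝓝 0)) ∧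
        (∀ U : Set Y, IsOpen U → ∀ n,
          IsFSigma {x : X | ∃ y ∈ U, (x, y) ∈ G n}) := by
  constructor
  · intro hf
    exact forward_direction hinv f hf
  · rintro ⟨G, _, _, _, h4, h5, h6⟩
    exact backward_direction f G h4 h5 h6
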